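/- Suppose condition (★) holds (so sCl(μ, B) has full dimension 2^n), and let M_1, …, M_n : Fin n → Fin n → 𝕜 be μ-symmetric matrices with M_1 + ⋯ + M_n = 2 • B. Let A(n) be the quotient of the free algebra on generators X_1, …, X_n, y_1, …, y_n (i.e. FreeAlgebra 𝕜 (Fin n ⊕ Fin n)) by the two-sided ideal generated by the elements X_i * X_j + μ i j • (X_j * X_i) − Σ_k (M_k i j) • y_k for all i, j, together with the elements y_k * X_i − X_i * y_k and y_k * y_l − y_l * y_k for all i, k, l. If A(n) is a domain (a nontrivial ring with no zero divisors), then (μ i j)^2 = 1 for all i, j. (The forward implication established in the proof of Theorem 5.5.) -/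

import Mathlib

open FreeAlgebra

/-- `μ` is multiplicatively antisymmetric: `μ i j * μ j i = 1` and `μ i i = 1`. -/
def MulAntisym {𝕜 : Type*} [Field 𝕜] {n : ℕ} (μ : Fin n → Fin n → 𝕜) : Prop :=
  ∀ i j, μ i j * μ j i = 1 ∧ μ i i = 1

/-- `B` is `μ`-symmetric: `B i j = μ i j * B j i`. -/
def MuSymm {𝕜 : Type*} [Field 𝕜] {n : ℕ} (μ B : Fin n → Fin n → 𝕜) : Prop :=
  ∀ i j, B i j = μ i j * B j i

/-- Condition (★): for all `i, j` with `B i j ≠ 0`, one has `μ i k = μ k j` for all `k`. -/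
def StarCond {𝕜 : Type*} [Field 𝕜] {n : ℕ} (μ B : Fin n → Fin n → 𝕜) : Prop :=
  ∀ i j, B i j ≠ 0 → ∀ k, μ i k = μ k j

/-- The defining relations of the skew Clifford algebra: identifying
`x_i x_j + μ i j • (x_j x_i)` with `(2 * B i j) • 1`, which amounts to quotienting the free
algebra by the two-sided ideal generated by
`x_i x_j + μ i j • (x_j x_i) - (2 * B i j) • 1`. -/
inductive sClRel (𝕜 : Type*) [Field 𝕜] (n : ℕ) (μ B : Fin n → Fin n → 𝕜) :
    FreeAlgebra 𝕜 (Fin n) → FreeAlgebra 𝕜 (Fin n) → Prop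
  | rel (i j : Fin n) : sClRel 𝕜 n μ B
      (ι 𝕜 i * ι 𝕜 j + μ i j • (ι 𝕜 j * ι 𝕜 i))
      ((2 * B i j) • (1 : FreeAlgebra 𝕜 (Fin n)))

/-- The skew Clifford algebra `sCl(μ, B)`. -/
abbrev sCl (𝕜 : Type*) [Field 𝕜] (n : ℕ) (μ B : Fin n → Fin n → 𝕜) : Type _ :=
  RingQuot (sClRel 𝕜 n μ B)

/-- The image `x̄_i` of the generator `x_i` in the skew Clifford algebra. -/
noncomputable def sClGen (𝕜 : Type*) [Field 𝕜] (n : ℕ) (μ B : Fin n → Fin n → 𝕜)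
    (i : Fin n) : sCl 𝕜 n μ B :=
  RingQuot.mkAlgHom 𝕜 (sClRel 𝕜 n μ B) (ι 𝕜 i)
/-- The defining relations of the graded skew Clifford algebra `A(n)`: the quadratic
relations `X_i X_j + μ i j • (X_j X_i) = Σ_k (M_k i j) • y_k`, together with relations
making each `y_k` central. -/
inductive AnRel (𝕜 : Type*) [Field 𝕜] (n : ℕ) (μ : Fin n → Fin n → 𝕜)
    (M : Fin n → Fin n → Fin n → 𝕜) :
    FreeAlgebra 𝕜 (Fin n ⊕ Fin n) → FreeAlgebra 𝕜 (Fin n ⊕ Fin n) → Prop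
  | xx (i j : Fin n) : AnRel 𝕜 n μ M
      (ι 𝕜 (Sum.inl i) * ι 𝕜 (Sum.inl j) + μ i j • (ι 𝕜 (Sum.inl j) * ι 𝕜 (Sum.inl i)))
      (∑ k, M k i j • ι 𝕜 (Sum.inr k))
  | yx (k i : Fin n) : AnRel 𝕜 n μ M
      (ι 𝕜 (Sum.inr k) * ι 𝕜 (Sum.inl i)) (ι 𝕜 (Sum.inl i) * ι 𝕜 (Sum.inr k))
  | yy (k l : Fin n) : AnRel 𝕜 n μ M
      (ι 𝕜 (Sum.inr k) * ι 𝕜 (Sum.inr l)) (ι 𝕜 (Sum.inr l) * ι 𝕜 (Sum.inr k))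

namespace SkewCliffordAux
open Matrix Kronecker

variable {𝕜 : Type*} [Field 𝕜]

noncomputable def auxE (𝕜 : Type*) [Field 𝕜] : Matrix (Fin 2) (Fin 2) 𝕜 :=
  single 0 1 1

noncomputable def auxU (𝕜 : Type*) [Field 𝕜] : Matrix (Fin 2 × Fin 2) (Fin 2 × Fin 2) 𝕜 :=
  auxE 𝕜 ⊗ₖ 1

noncomputable def auxV (q : 𝕜) : Matrix (Fin 2 × Fin 2) (Fin 2 × Fin 2) 𝕜 :=
  (diagonal ![1, -q]) ⊗ₖ auxE 𝕜

lemma auxEE : auxE 𝕜 * auxE 𝕜 = 0 :=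
  single_mul_single_of_ne 1 0 1 0 (by decide) 1

lemma auxDE (q : 𝕜) : diagonal ![1, -q] * auxE 𝕜 = auxE 𝕜 := by
  ext a b
  rw [auxE, diagonal_mul]
  fin_cases a <;> fin_cases b <;> simp [single]

lemma auxED (q : 𝕜) : auxE 𝕜 * diagonal ![1, -q] = (-q) • auxE 𝕜 := by
  ext a b
  rw [auxE, mul_diagonal]
  fin_cases a <;> fin_cases b <;> simp [single]

lemma auxUU : auxU 𝕜 * auxU 𝕜 = 0 := by
  rw [auxU, ← mul_kronecker_mul, auxEE, zero_kronecker]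

lemma auxVV (q : 𝕜) : auxV q * auxV q = 0 := by
  rw [auxV, ← mul_kronecker_mul, auxEE, kronecker_zero]

lemma auxVU (q : 𝕜) : auxV q * auxU 𝕜 = auxE 𝕜 ⊗ₖ auxE 𝕜 := by
  rw [auxV, auxU, ← mul_kronecker_mul, mul_one, auxDE]

lemma auxUV (q : 𝕜) : auxU 𝕜 * auxV q = (-q) • (auxV q * auxU 𝕜) := by
  rw [auxVU, auxU, auxV, ← mul_kronecker_mul, one_mul, auxED, smul_kronecker]

lemma auxVU_ne (q : 𝕜) : auxV q * auxU 𝕜 ≠ 0 := by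
  rw [auxVU]
  intro h
  have := congrFun (congrFun h ((0 : Fin 2), (0 : Fin 2))) ((1 : Fin 2), (1 : Fin 2))
  simp [auxE, kroneckerMap_apply, Matrix.one_apply] at this

lemma auxU_ne : auxU 𝕜 ≠ 0 := by
  rw [auxU]
  intro h
  have := congrFun (congrFun h ((0 : Fin 2), (0 : Fin 2))) ((1 : Fin 2), (0 : Fin 2))
  simp [auxE, kroneckerMap_apply, Matrix.one_apply] at this

lemma auxV_ne (q : 𝕜) : auxV q ≠ 0 := by
  rw [auxV]
  intro h
  have := congrFun (congrFun h ((0 : Fin 2), (0 : Fin 2))) ((0 : Fin 2), (1 : Fin 2))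
  simp [auxE, kroneckerMap_apply, Matrix.one_apply] at this

end SkewCliffordAux

open SkewCliffordAux in
/-- From the proof of Theorem 5.5: if `sCl(μ, B)` has full dimension (condition (★)) and
some homogenization `A(n)` is a domain, then `(μ i j)^2 = 1` for all `i, j`. -/
theorem domain_homogenization_implies_mu_sq_one
    (𝕜 : Type*) [Field 𝕜] (hchar : (2 : 𝕜) ≠ 0) (n : ℕ) (hn : 1 ≤ n)
    (μ B : Fin n → Fin n → 𝕜) (hμ : MulAntisym μ) (hB : MuSymm μ B)
    (hstar : StarCond μ B)
    (M : Fin n → Fin n → Fin n → 𝕜) (hM : ∀ k, MuSymm μ (M k))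
    (hMB : ∀ i j, ∑ k, M k i j = 2 * B i j)
    (hnt : Nontrivial (RingQuot (AnRel 𝕜 n μ M)))
    (hnzd : ∀ a b : RingQuot (AnRel 𝕜 n μ M), a * b = 0 → a = 0 ∨ b = 0) :
    ∀ i j, μ i j ^ 2 = 1 := by
  intro i j
  by_contra hq2
  set q : 𝕜 := μ i j with hq
  have hq1 : q ≠ 1 := fun h => hq2 (by rw [h]; ring)
  have hqm1 : q ≠ -1 := fun h => hq2 (by rw [h]; ring)
  have h1q : (1 : 𝕜) - q ≠ 0 := sub_ne_zero.2 hq1.symm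
  have h1pq : (1 : 𝕜) + q ≠ 0 := fun h => hqm1 (by linear_combination h)
  have hij : i ≠ j := by
    rintro rfl
    exact hq2 (by rw [hq, (hμ i i).2]; ring)
  set A := RingQuot (AnRel 𝕜 n μ M) with hA
  let π : FreeAlgebra 𝕜 (Fin n ⊕ Fin n) →ₐ[𝕜] A := RingQuot.mkAlgHom 𝕜 (AnRel 𝕜 n μ M)
  let x : Fin n → A := fun a => π (ι 𝕜 (Sum.inl a))
  let Y : Fin n → A := fun k => π (ι 𝕜 (Sum.inr k))
  have rel1 : ∀ a b, x a * x b + μ a b • (x b * x a) = ∑ k, M k a b • Y k := by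
    intro a b
    have h := RingQuot.mkAlgHom_rel 𝕜 (AnRel.xx (𝕜 := 𝕜) (n := n) (μ := μ) (M := M) a b)
    simpa [map_add, map_mul, map_smul, map_sum, x, Y, π] using h
  have relyx : ∀ k a, Y k * x a = x a * Y k := by
    intro k a
    have h := RingQuot.mkAlgHom_rel 𝕜 (AnRel.yx (𝕜 := 𝕜) (n := n) (μ := μ) (M := M) k a)
    simpa [map_mul, x, Y, π] using h
  have hcancel : ∀ (c : 𝕜), c ≠ 0 → ∀ w w' : A, c • w = c • w' → w = w' := by
    intro c hc w w' h
    have := congrArg (fun z => c⁻¹ • z) h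
    simpa [smul_smul, inv_mul_cancel₀ hc] using this
  have hScomm : ∀ (c : Fin n → 𝕜) (a : Fin n),
      (∑ k, c k • Y k) * x a = x a * ∑ k, c k • Y k := by
    intro c a
    rw [Finset.sum_mul, Finset.mul_sum]
    exact Finset.sum_congr rfl fun k _ => by
      rw [smul_mul_assoc, mul_smul_comm, relyx]
  have hsq : ∀ a b, x a * (x a * x b) = x b * (x a * x a) := by
    intro a b
    have h2 : (2 : 𝕜) • (x a * x a) = ∑ k, M k a a • Y k := by
      have h := rel1 a a
      rw [(hμ a a).2, one_smul] at h
      rw [two_smul]; exact h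
    have h3 : (2 : 𝕜) • (x a * (x a * x b)) = (2 : 𝕜) • (x b * (x a * x a)) := by
      calc (2 : 𝕜) • (x a * (x a * x b)) = ((2 : 𝕜) • (x a * x a)) * x b := by
            rw [smul_mul_assoc, mul_assoc]
        _ = x b * ((2 : 𝕜) • (x a * x a)) := by rw [h2]; exact hScomm _ _
        _ = (2 : 𝕜) • (x b * (x a * x a)) := by rw [mul_smul_comm]
    exact hcancel 2 hchar _ _ h3
  set Z : A := ∑ k, M k i j • Y k with hZ
  have hZc : ∀ a, Z * x a = x a * Z := fun a => hScomm _ a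
  have hR : x i * x j + q • (x j * x i) = Z := rel1 i j
  -- first key identity: (1 - q²) • (x j * (x i * x i)) = (1 - q) • (Z * x i)
  have key1 : (1 - q ^ 2) • (x j * (x i * x i)) = (1 - q) • (Z * x i) := by
    have e1 := congrArg (fun w => w * x i) hR
    have e2 := congrArg (fun w => x i * w) hR
    simp only [add_mul, mul_add, smul_mul_assoc, mul_smul_comm, mul_assoc] at e1 e2
    rw [hsq i j, ← hZc i] at e2
    linear_combination (norm := module) e2 - q • e1
  -- second key identity: (1 - q²) • (x i * (x j * x j)) = (1 - q) • (Z * x j)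
  have key2 : (1 - q ^ 2) • (x i * (x j * x j)) = (1 - q) • (Z * x j) := by
    have f1 := congrArg (fun w => w * x j) hR
    have f2 := congrArg (fun w => x j * w) hR
    simp only [add_mul, mul_add, smul_mul_assoc, mul_smul_comm, mul_assoc] at f1 f2
    rw [hsq j i, ← hZc j] at f2
    linear_combination (norm := module) f1 - q • f2
  -- the representation on 4×4 matrices
  let f : Fin n ⊕ Fin n → Matrix (Fin 2 × Fin 2) (Fin 2 × Fin 2) 𝕜 :=
    Sum.elim (fun a => if a = i then auxU 𝕜 else if a = j then auxV q else 0) (fun _ => 0)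
  let φ₀ : FreeAlgebra 𝕜 (Fin n ⊕ Fin n) →ₐ[𝕜] Matrix (Fin 2 × Fin 2) (Fin 2 × Fin 2) 𝕜 :=
    lift 𝕜 f
  have hcomp : ∀ ⦃w w' : FreeAlgebra 𝕜 (Fin n ⊕ Fin n)⦄, AnRel 𝕜 n μ M w w' → φ₀ w = φ₀ w' := by
    intro w w' h
    induction h with
    | xx a' b' =>
      simp only [map_add, map_mul, map_smul, map_sum, lift_ι_apply, φ₀, f,
        Sum.elim_inl, Sum.elim_inr, smul_zero, Finset.sum_const_zero]
      by_cases hai : a' = i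
      · by_cases hbi : b' = i
        · rw [if_pos hai, if_pos hbi, auxUU]; simp
        · by_cases hbj : b' = j
          · rw [if_pos hai, if_neg hbi, if_pos hbj, auxUV, hai, hbj]
            rw [← hq]
            module
          · rw [if_pos hai, if_neg hbi, if_neg hbj]; simp
      · by_cases haj : a' = j
        · by_cases hbi : b' = i
          · rw [if_neg hai, if_pos haj, if_pos hbi, auxUV, haj, hbi, smul_smul]
            have hm1 : μ j i * -q = -1 := by
              rw [hq]; linear_combination -((hμ j i).1)
            rw [hm1, neg_one_smul]
            exact add_neg_cancel _
          · by_cases hbj : b' = j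
            · rw [if_neg hai, if_pos haj, if_neg hbi, if_pos hbj, auxVV]; simp
            · rw [if_neg hai, if_pos haj, if_neg hbi, if_neg hbj]; simp
        · rw [if_neg hai, if_neg haj]; simp
    | yx k a' =>
      simp [φ₀, f, map_mul, lift_ι_apply]
    | yy k l =>
      simp [φ₀, f, map_mul, lift_ι_apply]
  let φ : A →ₐ[𝕜] Matrix (Fin 2 × Fin 2) (Fin 2 × Fin 2) 𝕜 :=
    RingQuot.liftAlgHom 𝕜 ⟨φ₀, hcomp⟩
  have hφx : ∀ a, φ (x a) =
      (if a = i then auxU 𝕜 else if a = j then auxV q else 0) := by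
    intro a
    show φ (π (ι 𝕜 (Sum.inl a))) = _
    rw [RingQuot.liftAlgHom_mkAlgHom_apply]
    simp [φ₀, f, lift_ι_apply]
  have hxi_ne : x i ≠ 0 := by
    intro h0
    have := congrArg φ h0
    rw [hφx i, if_pos rfl, map_zero] at this
    exact auxU_ne this
  have hxj_ne : x j ≠ 0 := by
    intro h0
    have := congrArg φ h0
    rw [hφx j, if_neg (Ne.symm hij), if_pos rfl, map_zero] at this
    exact auxV_ne q this
  -- factor key1: ((1-q²) • (x j * x i) - (1-q) • Z) * x i = 0
  have fac1 : ((1 - q ^ 2) • (x j * x i) - (1 - q) • Z) * x i = 0 := by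
    rw [sub_mul, smul_mul_assoc, smul_mul_assoc, mul_assoc, key1, sub_self]
  have fac2 : ((1 - q ^ 2) • (x i * x j) - (1 - q) • Z) * x j = 0 := by
    rw [sub_mul, smul_mul_assoc, smul_mul_assoc, mul_assoc, key2, sub_self]
  have eq1 : (1 + q) • (x j * x i) = Z := by
    rcases hnzd _ _ fac1 with h | h
    · have h' : (1 - q ^ 2) • (x j * x i) = (1 - q) • Z := sub_eq_zero.1 h
      apply hcancel (1 - q) h1q
      rw [smul_smul, show (1 - q) * (1 + q) = 1 - q ^ 2 by ring]
      exact h'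
    · exact absurd h hxi_ne
  have eq2 : (1 + q) • (x i * x j) = Z := by
    rcases hnzd _ _ fac2 with h | h
    · have h' : (1 - q ^ 2) • (x i * x j) = (1 - q) • Z := sub_eq_zero.1 h
      apply hcancel (1 - q) h1q
      rw [smul_smul, show (1 - q) * (1 + q) = 1 - q ^ 2 by ring]
      exact h'
    · exact absurd h hxj_ne
  have hcomm : x i * x j = x j * x i :=
    hcancel _ h1pq _ _ (eq2.trans eq1.symm)
  -- push to matrices: u * v = v * u, contradiction
  have hm : auxU 𝕜 * auxV q = auxV q * auxU 𝕜 := by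
    have := congrArg φ hcomm
    rw [map_mul, map_mul, hφx i, hφx j, if_pos rfl, if_neg (Ne.symm hij), if_pos rfl] at this
    exact this
  rw [auxUV] at hm
  have : ((1 : 𝕜) + q) • (auxV q * auxU 𝕜) = 0 := by
    rw [add_smul, one_smul]
    linear_combination (norm := module) -hm
  rcases smul_eq_zero.1 this with h | h
  · exact h1pq h
  · exact auxVU_ne q h
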